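/- Let B be a local ring, f : A → B an injective ring homomorphism, and J a nonzero proper ideal of B with J ⊆ f(A). Then A⋈^f J is not a self-injective ring. -/

import Mathlib

section Amalg
variable {A B : Type*} [CommRing A] [CommRing B]

/-- The amalgamation `A ⋈^f J = {(a, f a + j) | a ∈ A, j ∈ J}` as a subring of `A × B`. -/
def amalg (f : A →+* B) (J : Ideal B) : Subring (A × B) where
  carrier := {x | x.2 - f x.1 ∈ J}
  one_mem' := by simp
  zero_mem' := by simp
  mul_mem' := by
    rintro x y hx hy
    show (x * y).2 - f (x * y).1 ∈ J
    have h : (x * y).2 - f (x * y).1 = x.2 * (y.2 - f y.1) + (x.2 - f x.1) * f y.1 := by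
      simp only [Prod.fst_mul, Prod.snd_mul, map_mul]; ring
    rw [h]
    exact J.add_mem (J.mul_mem_left _ hy) (J.mul_mem_right _ hx)
  add_mem' := by
    rintro x y hx hy
    show (x + y).2 - f (x + y).1 ∈ J
    have h : (x + y).2 - f (x + y).1 = (x.2 - f x.1) + (y.2 - f y.1) := by
      simp only [Prod.fst_add, Prod.snd_add, map_add]; ring
    rw [h]; exact J.add_mem hx hy
  neg_mem' := by
    intro x hx
    show (-x).2 - f (-x).1 ∈ J
    have h : (-x).2 - f (-x).1 = -(x.2 - f x.1) := by
      simp only [Prod.fst_neg, Prod.snd_neg, map_neg]; ring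
    rw [h]; exact J.neg_mem hx

/-- The canonical embedding `A → A ⋈^f J`, `a ↦ (a, f a)`. -/
def amalgIota (f : A →+* B) (J : Ideal B) : A →+* amalg f J :=
  ((RingHom.id A).prod f).codRestrict (amalg f J) (fun a =>
    show (a, f a).2 - f (a, f a).1 ∈ J by simp)

/-- The projection `A ⋈^f J → A`. -/
def amalgFst (f : A →+* B) (J : Ideal B) : amalg f J →+* A :=
  (RingHom.fst A B).comp (amalg f J).subtype

end Amalg

set_option synthInstance.maxHeartbeats 1000000
set_option maxHeartbeats 1000000

/-- If `B` is local, `f` injective and `J` a nonzero proper ideal of `B` with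
`J ⊆ f(A)`, then `A⋈^f J` is never self-injective. -/
theorem amalg_not_selfInjective_of_local {A B : Type*} [CommRing A] [CommRing B]
    [IsLocalRing B] (f : A →+* B) (J : Ideal B) (hf : Function.Injective f)
    (hJ : (J : Set B) ⊆ Set.range f) (hJ0 : J ≠ ⊥) (hJtop : J ≠ ⊤) :
    ¬ Module.Injective (amalg f J) (amalg f J) := by
  intro inj
  set R := amalg f J
  -- the ideal N = (f⁻¹ J) × J inside R
  set N : Ideal R := {
    carrier := {x | f x.val.1 ∈ J}
    zero_mem' := by simp
    add_mem' := by
      intro x y hx hy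
      show f (x + y).val.1 ∈ J
      have : ((x + y : R) : A × B).1 = (x : A × B).1 + (y : A × B).1 := rfl
      rw [this, map_add]
      exact J.add_mem hx hy
    smul_mem' := by
      intro c x hx
      show f (c • x).val.1 ∈ J
      have : ((c • x : R) : A × B).1 = (c : A × B).1 * (x : A × B).1 := rfl
      rw [this, map_mul]
      exact J.mul_mem_left _ hx } with hN
  -- the projection N → R, (a, b) ↦ (a, 0)
  have memg : ∀ x : N, ((x.val.val.1, 0) : A × B) ∈ R := by
    intro x
    show (0 : B) - f x.val.val.1 ∈ J
    rw [zero_sub]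
    exact J.neg_mem x.property
  set g : N →ₗ[R] R := {
    toFun := fun x => ⟨(x.val.val.1, 0), memg x⟩
    map_add' := by
      intro x y
      apply Subtype.ext
      apply Prod.ext
      · rfl
      · show (0 : B) = 0 + 0; simp
    map_smul' := by
      intro c x
      apply Subtype.ext
      apply Prod.ext
      · rfl
      · show (0 : B) = (c : A × B).2 * 0; simp } with hg
  obtain ⟨h, hcomp⟩ := inj.out N.subtype (Submodule.injective_subtype N) g
  set r : R := h 1 with hr
  have key : ∀ x : R, h x = x * r := by
    intro x
    conv_lhs => rw [← mul_one x, ← smul_eq_mul, map_smul, ← hr, smul_eq_mul]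
  -- show J = ⊥
  have hbot : J ≤ ⊥ := by
    intro j hj
    obtain ⟨a, ha⟩ := hJ hj
    -- the element (0, j) of N
    have hx1R : ((0 : A), j) ∈ R := by
      show j - f 0 ∈ J; simpa using hj
    have hx1N : (⟨(0, j), hx1R⟩ : R) ∈ N := by
      show f (0 : A) ∈ J; simp
    have e1 : h ⟨(0, j), hx1R⟩ = g ⟨⟨(0, j), hx1R⟩, hx1N⟩ := hcomp ⟨⟨(0, j), hx1R⟩, hx1N⟩
    rw [key] at e1
    have e1' : j * (r : A × B).2 = 0 := by
      have := congrArg (fun z : R => (z : A × B).2) e1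
      simp at this; exact this
    -- the element (a, 0) of N
    have hx2R : (a, (0 : B)) ∈ R := by
      show (0 : B) - f a ∈ J
      rw [zero_sub, ha]
      exact J.neg_mem hj
    have hx2N : (⟨(a, 0), hx2R⟩ : R) ∈ N := by
      show f a ∈ J; rw [ha]; exact hj
    have e2 : h ⟨(a, 0), hx2R⟩ = g ⟨⟨(a, 0), hx2R⟩, hx2N⟩ := hcomp ⟨⟨(a, 0), hx2R⟩, hx2N⟩
    rw [key] at e2
    have e2' : a * (r : A × B).1 = a := by
      have := congrArg (fun z : R => (z : A × B).1) e2
      simp at this; exact this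
    have e2'' : j * f (r : A × B).1 = j := by
      have := congrArg f e2'
      rw [map_mul, ha] at this
      exact this
    -- k := r.2 - f r.1 ∈ J, and j * (1 + k) = 0
    have hk : (r : A × B).2 - f (r : A × B).1 ∈ J := r.property
    have hunit : IsUnit (1 + ((r : A × B).2 - f (r : A × B).1)) := by
      rw [← IsLocalRing.notMem_maximalIdeal]
      intro hmem
      have hkm : (r : A × B).2 - f (r : A × B).1 ∈ IsLocalRing.maximalIdeal B :=
        IsLocalRing.le_maximalIdeal hJtop hk
      have : (1 : B) ∈ IsLocalRing.maximalIdeal B := by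
        have := (IsLocalRing.maximalIdeal B).sub_mem hmem hkm
        simpa using this
      exact (IsLocalRing.maximalIdeal.isMaximal B).ne_top ((Ideal.eq_top_iff_one _).mpr this)
    have hzero : j * (1 + ((r : A × B).2 - f (r : A × B).1)) = 0 := by
      rw [mul_add, mul_one, mul_sub, e1', e2'']
      ring
    have : j = 0 := (IsUnit.mul_left_eq_zero hunit).mp hzero
    simpa using this
  exact hJ0 (le_bot_iff.mp hbot)
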